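/- Suppose n > (4/3)·log(1/δ) with δ ∈ (0,1). Let p̂ be any estimator and let p̂⁰ ∈ Δ^K denote the output of p̂ on the sample X_1 = ⋯ = X_n = K (so that n_{1,n} = ⋯ = n_{K−1,n} = 0). Then there exists p* ∈ Δ^K such that, with probability strictly greater than δ over n i.i.d. samples from p*, KL(p*‖p̂) ≥ (2·ln(1/δ))/(3n) · ( ln( 2·ln(1/δ)·(K−1) / (3n·∑_{i=1}^{K−1} p̂⁰(i)) ) − 1 ) + ∑_{i=1}^{K−1} p̂⁰(i). -/

import Mathlib

open scoped ENNReal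
open MeasureTheory

/-- The probability simplex on `Fin K`. -/
def simplex (K : ℕ) : Set (Fin K → ℝ) :=
  {p | (∀ i, 0 ≤ p i) ∧ ∑ i, p i = 1}

/-- Kullback–Leibler divergence between two vectors on `Fin K`, with the
conventions `0 · log 0 = 0` and value `∞` if `p i > 0 = q i` for some `i`. -/
noncomputable def klD {K : ℕ} (p q : Fin K → ℝ) : ℝ≥0∞ :=
  if ∀ i, 0 < p i → 0 < q i then ENNReal.ofReal (∑ i, p i * Real.log (p i / q i)) else ⊤

/-- The law of `n` i.i.d. samples from the distribution `p` on `Fin K`. -/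
noncomputable def iidMeasure (n K : ℕ) (p : Fin K → ℝ) : Measure (Fin n → Fin K) :=
  ∑ x : Fin n → Fin K, (∏ t, ENNReal.ofReal (p (x t))) • Measure.dirac x

/-- `countTo x t i` is the number of indices `s` among the first `t` samples with `x s = i`. -/
def countTo {n K : ℕ} (x : Fin n → Fin K) (t : ℕ) (i : Fin K) : ℕ :=
  (Finset.univ.filter (fun s : Fin n => (s : ℕ) < t ∧ x s = i)).card

lemma aux_two_log_le (y : ℝ) (hy : 1 ≤ y) : 2 * Real.log y ≤ y - 1 / y := by
  have hder : ∀ z : ℝ, z ≠ 0 →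
      HasDerivAt (fun z : ℝ => z - 1 / z - 2 * Real.log z) (1 + (z ^ 2)⁻¹ - 2 * z⁻¹) z := by
    intro z hz
    have h1 : HasDerivAt (fun z : ℝ => z - 1 / z - 2 * Real.log z)
        (1 - -(z ^ 2)⁻¹ - 2 * z⁻¹) z := by
      simpa [one_div, Pi.sub_def] using
        ((hasDerivAt_id z).sub (hasDerivAt_inv hz)).sub ((Real.hasDerivAt_log hz).const_mul 2)
    convert h1 using 1; ring
  have hmono : MonotoneOn (fun z : ℝ => z - 1 / z - 2 * Real.log z) (Set.Ici 1) := by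
    apply monotoneOn_of_deriv_nonneg (convex_Ici 1)
    · intro z hz
      have hz0 : z ≠ 0 := by simp only [Set.mem_Ici] at hz; intro h; rw [h] at hz; linarith
      exact (hder z hz0).continuousAt.continuousWithinAt
    · intro z hz
      rw [interior_Ici] at hz
      have hz0 : z ≠ 0 := by intro h; rw [h] at hz; exact absurd hz (by norm_num)
      exact ((hder z hz0).differentiableAt).differentiableWithinAt
    · intro z hz
      rw [interior_Ici] at hz
      have hz1 : (1 : ℝ) < z := hz
      have hz0 : z ≠ 0 := by linarith
      rw [(hder z hz0).deriv]
      have h1 : (z - 1) ^ 2 / z ^ 2 = 1 + (z ^ 2)⁻¹ - 2 * z⁻¹ := by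
        field_simp; ring
      rw [← h1]; positivity
  have h := hmono (Set.mem_Ici.2 (le_refl (1 : ℝ))) (Set.mem_Ici.2 hy) hy
  simp only [Real.log_one, one_div] at h ⊢
  norm_num at h
  linarith

lemma iid_single_le (n K : ℕ) (p : Fin K → ℝ) (E : Set (Fin n → Fin K)) (x0 : Fin n → Fin K)
    (hx0 : x0 ∈ E) : (∏ t, ENNReal.ofReal (p (x0 t))) ≤ iidMeasure n K p E := by
  rw [iidMeasure, Measure.finset_sum_apply]
  calc (∏ t, ENNReal.ofReal (p (x0 t)))
      = ((∏ t, ENNReal.ofReal (p (x0 t))) • Measure.dirac x0) E := by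
        rw [Measure.smul_apply, smul_eq_mul, Measure.dirac_apply_of_mem hx0, mul_one]
    _ ≤ ∑ x : Fin n → Fin K, ((∏ t, ENNReal.ofReal (p (x t))) • Measure.dirac x) E :=
        Finset.single_le_sum (f := fun x : Fin n → Fin K =>
          ((∏ t, ENNReal.ofReal (p (x t))) • Measure.dirac x) E)
          (fun _ _ => zero_le) (Finset.mem_univ x0)

set_option maxHeartbeats 1000000 in
theorem estimator_dependent_lower_bound (K n : ℕ) (hK : 2 ≤ K)
    (δ : ℝ) (hδ : δ ∈ Set.Ioo (0 : ℝ) 1)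
    (hn : (4/3 : ℝ) * Real.log (1/δ) < (n : ℝ))
    (phat : (Fin n → Fin K) → (Fin K → ℝ)) (hphat : ∀ x, phat x ∈ simplex K) :
    ∃ pstar ∈ simplex K,
      ENNReal.ofReal δ <
        iidMeasure n K pstar
          {x |
            ENNReal.ofReal
              (2 * Real.log (1/δ) / (3 * n) *
                  (Real.log (2 * Real.log (1/δ) * ((K : ℝ) - 1) /
                      (3 * n *
                        ∑ i ∈ Finset.univ.erase (⟨K - 1, by omega⟩ : Fin K),
                          phat (fun _ => (⟨K - 1, by omega⟩ : Fin K)) i)) - 1) +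
                ∑ i ∈ Finset.univ.erase (⟨K - 1, by omega⟩ : Fin K),
                  phat (fun _ => (⟨K - 1, by omega⟩ : Fin K)) i) ≤
            klD pstar (phat x)} := by
  obtain ⟨hδ0, hδ1⟩ := hδ
  have hL : 0 < Real.log (1 / δ) := Real.log_pos (by rw [lt_div_iff₀ hδ0]; linarith)
  set L : ℝ := Real.log (1 / δ) with hLdef
  have hn0 : (0 : ℝ) < (n : ℝ) := lt_trans (by positivity) hn
  set last : Fin K := (⟨K - 1, by omega⟩ : Fin K) with hlast
  set x0 : Fin n → Fin K := fun _ => last with hx0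
  set q : Fin K → ℝ := phat x0 with hqdef
  obtain ⟨hq0, hq1⟩ := hphat x0
  set ε : ℝ := 2 * L / (3 * n) with hεdef
  have hε0 : 0 < ε := by positivity
  have hεhalf : ε < 1 / 2 := by
    rw [hεdef, div_lt_iff₀ (by positivity)]; nlinarith
  have hnε : (n : ℝ) * ε = 2 * L / 3 := by
    rw [hεdef]; field_simp
  have hK2 : (2 : ℝ) ≤ (K : ℝ) := by exact_mod_cast hK
  set S : ℝ := ∑ i ∈ Finset.univ.erase last, q i with hSdef
  have hS0 : 0 ≤ S := Finset.sum_nonneg fun i _ => hq0 i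
  have hqlast : q last = 1 - S := by
    have h := Finset.add_sum_erase Finset.univ q (Finset.mem_univ last)
    rw [hq1] at h; linarith [h]
  -- minimizing index
  have hne : (Finset.univ.erase last).Nonempty := by
    refine ⟨⟨0, by omega⟩, Finset.mem_erase.2 ⟨?_, Finset.mem_univ _⟩⟩
    simp only [hlast, ne_eq, Fin.mk.injEq]
    omega
  obtain ⟨i0, hi0mem, hi0min⟩ := Finset.exists_min_image (Finset.univ.erase last) q hne
  have hi0ne : i0 ≠ last := (Finset.mem_erase.1 hi0mem).1
  have hcard : (Finset.univ.erase last).card = K - 1 := by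
    rw [Finset.card_erase_of_mem (Finset.mem_univ _), Finset.card_univ, Fintype.card_fin]
  have hmin : ((K : ℝ) - 1) * q i0 ≤ S := by
    have h := Finset.card_nsmul_le_sum (Finset.univ.erase last) q (q i0) hi0min
    rw [hcard, nsmul_eq_mul] at h
    have hc : ((K - 1 : ℕ) : ℝ) = (K : ℝ) - 1 := by
      rw [Nat.cast_sub (by omega : 1 ≤ K)]; norm_num
    rw [hc] at h; exact h
  -- the distribution
  set pstar : Fin K → ℝ := fun i => if i = i0 then ε else if i = last then 1 - ε else 0
    with hpdef
  have hpi0 : pstar i0 = ε := by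
    show (if i0 = i0 then ε else if i0 = last then 1 - ε else 0) = ε
    rw [if_pos rfl]
  have hplast : pstar last = 1 - ε := by
    show (if last = i0 then ε else if last = last then 1 - ε else 0) = 1 - ε
    rw [if_neg (Ne.symm hi0ne), if_pos rfl]
  have hpother : ∀ i, i ≠ i0 → i ≠ last → pstar i = 0 := by
    intro i h1 h2
    show (if i = i0 then ε else if i = last then 1 - ε else 0) = 0
    rw [if_neg h1, if_neg h2]
  have hsum2 : ∀ f : Fin K → ℝ, (∀ i, i ≠ i0 → i ≠ last → f i = 0) →
      ∑ i, f i = f i0 + f last := by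
    intro f hf
    rw [← Finset.sum_subset (Finset.subset_univ {i0, last})]
    · rw [Finset.sum_insert (by simp [hi0ne]), Finset.sum_singleton]
    · intro i _ hi
      simp only [Finset.mem_insert, Finset.mem_singleton, not_or] at hi
      exact hf i hi.1 hi.2
  have hpsimplex : pstar ∈ simplex K := by
    constructor
    · intro i
      show (0:ℝ) ≤ if i = i0 then ε else if i = last then 1 - ε else 0
      split_ifs <;> linarith
    · rw [hsum2 pstar hpother, hpi0, hplast]; ring
  have h1ε : (0 : ℝ) < 1 - ε := by linarith
  have hq0' : ∀ i, 0 ≤ q i := hq0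
  have hx0t : ∀ t : Fin n, x0 t = last := fun _ => rfl
  clear_value pstar S ε q x0 last L
  refine ⟨pstar, hpsimplex, ?_⟩
  -- x0 belongs to the event
  have hx0mem : ENNReal.ofReal
        (ε * (Real.log (2 * L * ((K : ℝ) - 1) / (3 * (n : ℝ) * S)) - 1) + S) ≤
      klD pstar q := by
    by_cases hpos : ∀ i, 0 < pstar i → 0 < q i
    · have hqi0 : 0 < q i0 := hpos i0 (by rw [hpi0]; exact hε0)
      have hqlastpos : 0 < q last := hpos last (by rw [hplast]; linarith)
      have hSpos : 0 < S := lt_of_lt_of_le (by nlinarith) hmin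
      have hS1 : S < 1 := by rw [hqlast] at hqlastpos; linarith
      rw [klD, if_pos hpos]
      apply ENNReal.ofReal_le_ofReal
      have hsum : ∑ i, pstar i * Real.log (pstar i / q i) =
          ε * Real.log (ε / q i0) + (1 - ε) * Real.log ((1 - ε) / q last) := by
        rw [hsum2 _ (fun i h1 h2 => by rw [hpother i h1 h2, zero_mul]), hpi0, hplast]
      rw [hsum]
      have harg : 2 * L * ((K : ℝ) - 1) / (3 * (n : ℝ) * S) = ε * ((K : ℝ) - 1) / S := by
        rw [hεdef]; field_simp
      have hA : ε * Real.log (ε * ((K : ℝ) - 1) / S) ≤ ε * Real.log (ε / q i0) := by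
        apply mul_le_mul_of_nonneg_left _ hε0.le
        apply Real.log_le_log (div_pos (mul_pos hε0 (by linarith)) hSpos)
        rw [div_le_div_iff₀ hSpos hqi0]
        nlinarith
      have hB : S - ε ≤ (1 - ε) * Real.log ((1 - ε) / q last) := by
        have h1 : Real.log (q last / (1 - ε)) ≤ q last / (1 - ε) - 1 :=
          Real.log_le_sub_one_of_pos (div_pos hqlastpos h1ε)
        have h2 : Real.log ((1 - ε) / q last) = -Real.log (q last / (1 - ε)) := by
          rw [← Real.log_inv]
          congr 1
          rw [eq_comm, inv_eq_iff_eq_inv, inv_div]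
        have hmul := mul_le_mul_of_nonneg_left h1 h1ε.le
        have hkey : (1 - ε) * (q last / (1 - ε) - 1) = q last - (1 - ε) := by
          field_simp
        have hneg : (1 - ε) * Real.log ((1 - ε) / q last) =
            -((1 - ε) * Real.log (q last / (1 - ε))) := by rw [h2]; ring
        rw [hneg, hqlast] at *
        rw [hkey] at hmul
        linarith
      rw [harg]
      linarith
    · rw [klD, if_neg hpos]; exact le_top
  -- δ < (1-ε)^n
  have hδlt : δ < (1 - ε) ^ n := by
    have hy : (1 : ℝ) ≤ (1 - ε)⁻¹ := by
      nlinarith [mul_inv_cancel₀ (ne_of_gt h1ε), inv_pos.2 h1ε]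
    have haux := aux_two_log_le (1 - ε)⁻¹ hy
    have hlogy : Real.log (1 - ε)⁻¹ = -Real.log (1 - ε) := Real.log_inv _
    have hyval : (1 - ε)⁻¹ - 1 / (1 - ε)⁻¹ = ε * (2 - ε) / (1 - ε) := by
      field_simp; ring
    rw [hlogy, hyval] at haux
    have hstep : (n : ℝ) * (-Real.log (1 - ε)) < L := by
      have h2 : -Real.log (1 - ε) ≤ ε * (2 - ε) / (2 * (1 - ε)) := by
        have hhalf : (ε * (2 - ε) / (1 - ε)) / 2 = ε * (2 - ε) / (2 * (1 - ε)) := by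
          rw [div_div, mul_comm (1 - ε) 2]
        rw [← hhalf]
        linarith
      have h3 : (n : ℝ) * (ε * (2 - ε) / (2 * (1 - ε))) < L := by
        have hfrac : (2 - ε) / (2 * (1 - ε)) < 3 / 2 := by
          rw [div_lt_iff₀ (by linarith : (0:ℝ) < 2 * (1 - ε))]; linarith
        have hrw : (n : ℝ) * (ε * (2 - ε) / (2 * (1 - ε))) =
            ((n : ℝ) * ε) * ((2 - ε) / (2 * (1 - ε))) := by ring
        rw [hrw, hnε]
        nlinarith [mul_lt_mul_of_pos_left hfrac (by linarith : (0:ℝ) < 2 * L / 3)]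
      calc (n : ℝ) * (-Real.log (1 - ε)) ≤ (n : ℝ) * (ε * (2 - ε) / (2 * (1 - ε))) :=
            mul_le_mul_of_nonneg_left h2 hn0.le
        _ < L := h3
    have hlogδ : Real.log δ = -L := by rw [hLdef, one_div, Real.log_inv, neg_neg]
    have hloglt : Real.log δ < Real.log ((1 - ε) ^ n) := by
      rw [Real.log_pow, hlogδ]
      nlinarith
    calc δ = Real.exp (Real.log δ) := (Real.exp_log hδ0).symm
      _ < Real.exp (Real.log ((1 - ε) ^ n)) := Real.exp_lt_exp.2 hloglt
      _ = (1 - ε) ^ n := Real.exp_log (pow_pos h1ε n)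
  have hprod : (∏ t : Fin n, ENNReal.ofReal (pstar (x0 t))) = ENNReal.ofReal ((1 - ε) ^ n) := by
    have hpt : ∀ t : Fin n, ENNReal.ofReal (pstar (x0 t)) = ENNReal.ofReal (1 - ε) :=
      fun t => by rw [show pstar (x0 t) = 1 - ε from (hx0t t) ▸ hplast]
    rw [Finset.prod_congr rfl fun t _ => hpt t, Finset.prod_const, Finset.card_univ,
      Fintype.card_fin, ← ENNReal.ofReal_pow h1ε.le]
  rw [hqdef] at hx0mem
  calc ENNReal.ofReal δ < ENNReal.ofReal ((1 - ε) ^ n) :=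
        (ENNReal.ofReal_lt_ofReal_iff (pow_pos h1ε n)).2 hδlt
    _ = ∏ t : Fin n, ENNReal.ofReal (pstar (x0 t)) := hprod.symm
    _ ≤ _ := iid_single_le n K pstar _ x0 hx0mem
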